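/- Suppose |z| ≤ Cλ^{-1/2}, |τ| ≤ Cλ^{-1/2} for constants C > 0 and λ ≥ 1, and suppose 𝒜(z,τ,t) ≥ δ for some δ > 0, where cosh(𝒜(z,τ,t)) = cosh(t) + (1/2)e^{-t}(|z|⁴+2|z|²+τ²) + |z|². Then there is a constant c > 0 depending only on C and an upper bound on |t| such that, if additionally λ ≥ λ₀(C,δ) is sufficiently large and |t| ≤ 1, then |t| ≥ cδ. -/

import Mathlib

set_option maxHeartbeats 800000


open Complex

/-- Lower bound: `1 + x^2/2 ≤ cosh x`. -/
lemma aux_cosh_lower (x : ℝ) : 1 + x^2/2 ≤ Real.cosh x := by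
  have h := Real.cosh_two_mul (x/2)
  have h2 : Real.cosh (x/2) ^ 2 = Real.sinh (x/2) ^ 2 + 1 := Real.cosh_sq (x/2)
  have hx : (2:ℝ) * (x/2) = x := by ring
  rw [hx] at h
  rcases le_or_gt 0 x with hx0 | hx0
  · have hs : x/2 ≤ Real.sinh (x/2) := Real.self_le_sinh_iff.mpr (by linarith)
    nlinarith [sq_nonneg (Real.sinh (x/2) - x/2)]
  · have hs : Real.sinh (x/2) ≤ x/2 := by
      have := Real.self_le_sinh_iff (x := -(x/2)) |>.mpr (by linarith)
      rw [Real.sinh_neg] at this; linarith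
    nlinarith [sq_nonneg (Real.sinh (x/2) - x/2)]

/-- Upper bound: `cosh x ≤ 1 + (3/4) x^2` for `|x| ≤ 1`. -/
lemma aux_cosh_upper {x : ℝ} (hx : |x| ≤ 1) : Real.cosh x ≤ 1 + (3/4) * x^2 := by
  have h1 := Real.exp_bound hx (n := 2) (by norm_num)
  have hx' : |(-x)| ≤ 1 := by rwa [abs_neg]
  have h2 := Real.exp_bound hx' (n := 2) (by norm_num)
  simp only [Finset.sum_range_succ, Finset.sum_range_zero] at h1 h2
  norm_num at h1 h2
  have e1 := abs_sub_le_iff.1 h1 |>.1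
  have e2 := abs_sub_le_iff.1 h2 |>.1
  rw [Real.cosh_eq]
  have hax : |x|^2 = x^2 := sq_abs x
  nlinarith [hax]

/-- If |z|,|τ| ≪ λ^{-1/2} and the Cartan radial component 𝒜(z,τ,t) ≥ δ, then |t| ≫ δ
(for λ large and |t| ≤ 1). -/
theorem lower_bound_for_t_from_radial_component :
    ∀ C > (0:ℝ), ∃ c > (0:ℝ), ∀ δ > (0:ℝ), ∃ lam0 : ℝ, ∀ lam ≥ lam0, lam ≥ 1 →
      ∀ (z : ℂ) (τ t 𝒜 : ℝ),
        ‖z‖ ≤ C * lam ^ (-(1:ℝ)/2) →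
        |τ| ≤ C * lam ^ (-(1:ℝ)/2) →
        |t| ≤ 1 →
        0 ≤ 𝒜 →
        Real.cosh 𝒜 = Real.cosh t
          + (1/2) * Real.exp (-t) * ((normSq z)^2 + 2 * normSq z + τ^2) + normSq z →
        δ ≤ 𝒜 →
        c * δ ≤ |t| := by
  intro C hC
  refine ⟨1/2, by norm_num, ?_⟩
  intro δ hδ
  set K : ℝ := Real.exp 1 * (C^4 + 3*C^2) + C^2 with hK
  have hKpos : 0 < K := by positivity
  refine ⟨1 + 4*K/δ^2, ?_⟩
  intro lam hlam hlam1 z τ t 𝒜 hz hτ ht h𝒜0 heq hδ𝒜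
  have hlampos : (0:ℝ) < lam := lt_of_lt_of_le one_pos hlam1
  -- (lam ^ (-1/2))^2 = lam⁻¹
  have hrw : (lam ^ (-(1:ℝ)/2))^2 = lam⁻¹ := by
    rw [← Real.rpow_natCast (lam ^ (-(1:ℝ)/2)) 2, ← Real.rpow_mul hlampos.le]
    norm_num
    exact Real.rpow_neg_one lam
  have hrpos : (0:ℝ) ≤ lam ^ (-(1:ℝ)/2) := Real.rpow_nonneg hlampos.le _
  -- bound normSq z and τ^2
  have hnz : normSq z ≤ C^2 / lam := by
    have : ‖z‖^2 ≤ (C * lam ^ (-(1:ℝ)/2))^2 := by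
      apply pow_le_pow_left₀ (norm_nonneg z) hz
    rw [Complex.sq_norm] at this
    calc normSq z ≤ (C * lam ^ (-(1:ℝ)/2))^2 := this
      _ = C^2 * (lam ^ (-(1:ℝ)/2))^2 := by ring
      _ = C^2 / lam := by rw [hrw]; field_simp
  have hτ2 : τ^2 ≤ C^2 / lam := by
    have : |τ|^2 ≤ (C * lam ^ (-(1:ℝ)/2))^2 :=
      pow_le_pow_left₀ (abs_nonneg τ) hτ 2
    rw [_root_.sq_abs] at this
    calc τ^2 ≤ (C * lam ^ (-(1:ℝ)/2))^2 := this
      _ = C^2 * (lam ^ (-(1:ℝ)/2))^2 := by ring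
      _ = C^2 / lam := by rw [hrw]; field_simp
  have hnz0 : 0 ≤ normSq z := normSq_nonneg z
  have hnz2 : (normSq z)^2 ≤ C^4 / lam := by
    have h1 : (normSq z)^2 ≤ (C^2/lam)^2 := pow_le_pow_left₀ hnz0 hnz 2
    have h2 : (C^2/lam)^2 ≤ C^4 / lam := by
      rw [div_pow, div_le_div_iff₀ (by positivity) hlampos]
      have : lam ≤ lam^2 := by nlinarith
      nlinarith [sq_nonneg C, sq_nonneg (C^2)]
    linarith
  have hexp : Real.exp (-t) ≤ Real.exp 1 := by
    apply Real.exp_le_exp.mpr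
    have := abs_le.1 ht
    linarith [this.1]
  have hexp0 : (0:ℝ) < Real.exp (-t) := Real.exp_pos _
  -- bound the error term E
  set E : ℝ := (1/2) * Real.exp (-t) * ((normSq z)^2 + 2 * normSq z + τ^2) + normSq z with hE
  have hEnn : 0 ≤ E := by positivity
  have hEle : E ≤ K / lam := by
    have hsum : (normSq z)^2 + 2 * normSq z + τ^2 ≤ (C^4 + 3*C^2)/lam := by
      have : (C^4 + 3*C^2)/lam = C^4/lam + 2*(C^2/lam) + C^2/lam := by ring
      rw [this]; linarith
    have h1 : (1/2) * Real.exp (-t) * ((normSq z)^2 + 2 * normSq z + τ^2)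
        ≤ Real.exp 1 * ((C^4 + 3*C^2)/lam) := by
      have hs0 : 0 ≤ (normSq z)^2 + 2 * normSq z + τ^2 := by positivity
      have hm : Real.exp (-t) * ((normSq z)^2 + 2 * normSq z + τ^2)
          ≤ Real.exp 1 * ((C^4 + 3*C^2)/lam) :=
        mul_le_mul hexp hsum hs0 (Real.exp_pos 1).le
      have hn : 0 ≤ Real.exp (-t) * ((normSq z)^2 + 2 * normSq z + τ^2) :=
        mul_nonneg hexp0.le hs0
      linarith
    have : K / lam = Real.exp 1 * ((C^4 + 3*C^2)/lam) + C^2/lam := by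
      rw [hK]; ring
    rw [hE, this]; linarith
  have hEsmall : E ≤ δ^2/4 := by
    have hlamK : 4*K/δ^2 ≤ lam := by linarith
    have : K / lam ≤ δ^2/4 := by
      rw [div_le_div_iff₀ hlampos (by norm_num)]
      rw [div_le_iff₀ (by positivity)] at hlamK
      nlinarith
    linarith
  -- cosh δ ≤ cosh 𝒜
  have hcosh : Real.cosh δ ≤ Real.cosh 𝒜 := by
    apply Real.cosh_le_cosh.mpr
    have h1 : |δ| = δ := abs_of_pos hδ
    have h2 : |𝒜| = 𝒜 := abs_of_nonneg h𝒜0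
    rw [h1, h2]; exact hδ𝒜
  have hlow : 1 + δ^2/2 ≤ Real.cosh δ := aux_cosh_lower δ
  have hup : Real.cosh t ≤ 1 + (3/4) * t^2 := aux_cosh_upper ht
  -- combine
  have key : δ^2/4 ≤ t^2 := by
    have : Real.cosh 𝒜 = Real.cosh t + E := by rw [heq, hE]; ring
    nlinarith
  have : |t|^2 = t^2 := _root_.sq_abs t
  nlinarith [abs_nonneg t]
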